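/- For every t ≠ 0 one has t/G⁻¹(t) ≥ g(G⁻¹(t)); equivalently, 0 ≤ g(G⁻¹(t))·G⁻¹(t) ≤ t for t > 0 and t ≤ g(G⁻¹(t))·G⁻¹(t) ≤ 0 for t < 0. -/

import Mathlib

open Real Filter Set

/-- The constant α = (9+3√5)/2. -/
noncomputable def alph : ℝ := (9 + 3 * Real.sqrt 5) / 2

/-- The constant β = 2 α^{3/2} √(α−1). -/
noncomputable def bet : ℝ := 2 * alph ^ ((3 : ℝ) / 2) * Real.sqrt (alph - 1)

/-- The change-of-variable function g (extended evenly to negative arguments):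
g(s) = √(1 − k s²) for |s| < (αk)^{−1/2}, and g(s) = 1/(βk s²) + √3/2 for |s| ≥ (αk)^{−1/2}. -/
noncomputable def g (k s : ℝ) : ℝ :=
  if |s| < 1 / Real.sqrt (alph * k) then Real.sqrt (1 - k * s ^ 2)
  else 1 / (bet * k * s ^ 2) + Real.sqrt 3 / 2

/-- G(t) = ∫₀ᵗ g(s) ds. -/
noncomputable def G (k t : ℝ) : ℝ := ∫ s in (0 : ℝ)..t, g k s


lemma h5 : Real.sqrt 5 ^ 2 = 5 := Real.sq_sqrt (by norm_num)
lemma h5pos : 0 < Real.sqrt 5 := Real.sqrt_pos.2 (by norm_num)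
lemma alph_gt_one : 1 < alph := by unfold alph; linarith [h5pos]
lemma alph_pos : 0 < alph := lt_trans one_pos alph_gt_one

noncomputable def E : ℝ := Real.sqrt 3 * (2 + Real.sqrt 5)
lemma h3 : Real.sqrt 3 ^ 2 = 3 := Real.sq_sqrt (by norm_num)
lemma h3pos : 0 < Real.sqrt 3 := Real.sqrt_pos.2 (by norm_num)
lemma Epos : 0 < E := by
  have := h3pos; have := h5pos; unfold E; nlinarith
lemma hE2 : E ^ 2 = alph * (alph - 1) := by
  unfold E alph
  linear_combination (2 + Real.sqrt 5)^2 * h3 + (3/4) * h5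

lemma hbet : bet = 2 * alph * E := by
  unfold bet
  rw [show (3:ℝ)/2 = 1 + 1/2 by norm_num, Real.rpow_add alph_pos, Real.rpow_one,
    ← Real.sqrt_eq_rpow]
  rw [mul_assoc, mul_assoc, ← Real.sqrt_mul alph_pos.le]
  rw [show Real.sqrt (alph * (alph - 1)) = E by rw [← hE2, Real.sqrt_sq Epos.le]]
  ring

lemma bet_pos : 0 < bet := by
  rw [hbet]; have := alph_pos; have := Epos; positivity

lemma key : alph + alph * Real.sqrt 3 * E = 2 * E ^ 2 := by
  unfold E alph
  linear_combination ((9+3*Real.sqrt 5)*(2+Real.sqrt 5)/2 - 2*(2+Real.sqrt 5)^2) * h3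
    - (3/2) * h5

-- the boundary identity: α/β + √3/2 = √((α−1)/α)
lemma boundary : alph / bet + Real.sqrt 3 / 2 = Real.sqrt ((alph - 1) / alph) := by
  have h1 : Real.sqrt ((alph - 1) / alph) = E / alph := by
    rw [show (alph - 1) / alph = (E / alph) ^ 2 by
      have ha := alph_pos.ne'
      rw [div_pow, hE2]; field_simp]
    exact Real.sqrt_sq (le_of_lt (div_pos Epos alph_pos))
  rw [h1, hbet, div_add_div _ _ (by have := alph_pos; have := Epos; positivity)
    (by norm_num : (2:ℝ) ≠ 0), div_eq_div_iff (by have := alph_pos; have := Epos; positivity)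
    alph_pos.ne']
  linear_combination (2 * alph) * key


section glemmas
variable {k : ℝ} (hk : 0 < k)
include hk

lemma c_pos : 0 < 1 / Real.sqrt (alph * k) :=
  div_pos one_pos (Real.sqrt_pos.2 (mul_pos alph_pos hk))

lemma c_sq : (1 / Real.sqrt (alph * k)) ^ 2 = 1 / (alph * k) := by
  rw [div_pow, one_pow, Real.sq_sqrt (mul_pos alph_pos hk).le]

lemma inner_lb {s : ℝ} (hs : |s| < 1 / Real.sqrt (alph * k)) :
    (alph - 1) / alph ≤ 1 - k * s ^ 2 := by
  have h1 : s ^ 2 ≤ 1 / (alph * k) := by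
    rw [← c_sq hk, ← sq_abs]
    exact pow_le_pow_left₀ (abs_nonneg s) hs.le 2
  have hkne := hk.ne'
  have hane := alph_pos.ne'
  have h2 : k * s ^ 2 ≤ 1 / alph := by
    have := mul_le_mul_of_nonneg_left h1 hk.le
    rwa [show k * (1/(alph*k)) = 1/alph by field_simp] at this
  have h3' : k * s ^ 2 * alph ≤ 1 := by
    have := mul_le_mul_of_nonneg_right h2 alph_pos.le
    rwa [one_div, inv_mul_cancel₀ hane] at this
  rw [div_le_iff₀ alph_pos]
  nlinarith [h3']

lemma g_pos (s : ℝ) : 0 < g k s := by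
  unfold g; split_ifs with h
  · apply Real.sqrt_pos.2
    have := inner_lb hk h
    have h2 : (0:ℝ) < (alph - 1) / alph := div_pos (by linarith [alph_gt_one]) alph_pos
    linarith
  · have hs : s ≠ 0 := by
      intro h0; rw [h0] at h; simp at h; nlinarith [mul_pos alph_pos hk]
    have : 0 < 1 / (bet * k * s ^ 2) :=
      div_pos one_pos (mul_pos (mul_pos bet_pos hk) (by positivity))
    linarith [h3pos]

lemma out_lb {x : ℝ} (h1 : 1 / Real.sqrt (alph * k) ≤ |x|) :
    1 / (bet * k * x ^ 2) ≤ alph / bet := by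
  have hx2 : 1 / (alph * k) ≤ x ^ 2 := by
    rw [← c_sq hk, ← sq_abs x]
    exact pow_le_pow_left₀ (c_pos hk).le h1 2
  have hx2pos : 0 < x ^ 2 := lt_of_lt_of_le (div_pos one_pos (mul_pos alph_pos hk)) hx2
  have hkne := hk.ne'
  have hane := alph_pos.ne'
  rw [div_le_div_iff₀ (mul_pos (mul_pos bet_pos hk) hx2pos) bet_pos]
  calc 1 * bet = bet * k * (1/(alph*k)) * alph := by field_simp
    _ ≤ bet * k * x ^ 2 * alph :=
        mul_le_mul_of_nonneg_right
          (mul_le_mul_of_nonneg_left hx2 (mul_pos bet_pos hk).le) alph_pos.le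
    _ = alph * (bet * k * x ^ 2) := by ring

lemma g_le_one (s : ℝ) : g k s ≤ 1 := by
  have hle : Real.sqrt ((alph - 1)/alph) ≤ 1 := by
    have h := Real.sqrt_le_sqrt (show (alph - 1)/alph ≤ 1 by
      rw [div_le_one alph_pos]; linarith [alph_gt_one])
    simpa [Real.sqrt_one] using h
  unfold g; split_ifs with h
  · calc Real.sqrt (1 - k * s ^ 2) ≤ Real.sqrt 1 :=
        Real.sqrt_le_sqrt (by nlinarith [sq_nonneg s])
      _ = 1 := Real.sqrt_one
  · push_neg at h
    calc 1 / (bet * k * s ^ 2) + Real.sqrt 3 / 2 ≤ alph / bet + Real.sqrt 3 / 2 := by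
          linarith [out_lb hk h]
      _ = Real.sqrt ((alph - 1)/alph) := boundary
      _ ≤ 1 := hle

lemma g_anti {s x : ℝ} (hs : 0 ≤ s) (hsx : s ≤ x) : g k x ≤ g k s := by
  unfold g; split_ifs with h1 h2 h2
  · apply Real.sqrt_le_sqrt
    have h := pow_le_pow_left₀ hs hsx 2
    nlinarith [mul_le_mul_of_nonneg_left h hk.le]
  · exfalso; push_neg at h2
    rw [abs_of_nonneg hs] at h2
    rw [abs_of_nonneg (le_trans hs hsx)] at h1
    linarith
  · push_neg at h1
    calc 1 / (bet * k * x ^ 2) + Real.sqrt 3 / 2 ≤ alph / bet + Real.sqrt 3 / 2 := by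
          linarith [out_lb hk h1]
      _ = Real.sqrt ((alph - 1)/alph) := boundary
      _ ≤ Real.sqrt (1 - k * s ^ 2) := Real.sqrt_le_sqrt (inner_lb hk h2)
  · push_neg at h1
    have hs0 : 0 < s := by
      rcases lt_or_eq_of_le hs with h | h
      · exact h
      · exfalso; rw [← h] at h2; push_neg at h2; simp at h2
        linarith [Real.sqrt_pos.2 (mul_pos alph_pos hk)]
    have hx2 : s ^ 2 ≤ x ^ 2 := pow_le_pow_left₀ hs hsx 2
    have hden : 0 < bet * k * s ^ 2 := mul_pos (mul_pos bet_pos hk) (by positivity)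
    have hmul : bet * k * s ^ 2 ≤ bet * k * x ^ 2 :=
      mul_le_mul_of_nonneg_left hx2 (mul_pos bet_pos hk).le
    have := one_div_le_one_div_of_le hden hmul
    linarith

omit hk

lemma g_even (s : ℝ) : g k (-s) = g k s := by
  unfold g; rw [abs_neg, neg_pow]; ring_nf

lemma g_meas : Measurable (g k) := by
  unfold g
  apply Measurable.ite
  · exact measurableSet_lt (by fun_prop) measurable_const
  · fun_prop
  · fun_prop

include hk

lemma g_intble (a b : ℝ) : IntervalIntegrable (g k) MeasureTheory.volume a b := by
  rw [intervalIntegrable_iff]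
  apply MeasureTheory.Measure.integrableOn_of_bounded (M := 1)
  · exact (measure_Ioc_lt_top).ne
  · exact (g_meas (k := k)).aestronglyMeasurable
  · filter_upwards with s
    rw [Real.norm_eq_abs, abs_of_pos (g_pos hk s)]
    exact g_le_one hk s

end glemmas

section Glemmas
variable {k : ℝ} (hk : 0 < k)

lemma G_zero : G k 0 = 0 := intervalIntegral.integral_same

include hk

lemma G_lb {x : ℝ} (hx : 0 ≤ x) : g k x * x ≤ G k x := by
  have h := intervalIntegral.integral_mono_on (μ := MeasureTheory.volume) hx
    (intervalIntegrable_const (c := g k x)) (g_intble hk 0 x)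
    (fun s hs => g_anti hk hs.1 hs.2)
  simpa [mul_comm, G] using h

lemma G_mono {x y : ℝ} (hxy : x ≤ y) : G k x ≤ G k y := by
  have hadd := intervalIntegral.integral_add_adjacent_intervals
    (g_intble hk 0 x) (g_intble hk x y)
  have hnn : (0:ℝ) ≤ ∫ s in x..y, g k s :=
    intervalIntegral.integral_nonneg hxy (fun u _ => (g_pos hk u).le)
  unfold G; linarith [hadd, hnn]

lemma G_neg (x : ℝ) : G k (-x) = - G k x := by
  have h1 : (∫ s in (0:ℝ)..x, g k (-s)) = ∫ s in (-x)..(0:ℝ), g k s := by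
    simpa using intervalIntegral.integral_comp_neg (a := (0:ℝ)) (b := x) (fun s => g k s)
  have h2 : (∫ s in (0:ℝ)..x, g k (-s)) = G k x := by
    unfold G; simp only [g_even]
  have h3 : (∫ s in (-x)..(0:ℝ), g k s) = - G k (-x) := by
    unfold G; exact intervalIntegral.integral_symm _ _
  rw [h2, h3] at h1; linarith

end Glemmas


/-- For t ≠ 0, t/G⁻¹(t) ≥ g(G⁻¹(t)); equivalently 0 ≤ g(G⁻¹(t))·G⁻¹(t) ≤ t for t > 0
and t ≤ g(G⁻¹(t))·G⁻¹(t) ≤ 0 for t < 0. -/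
theorem stmt10 (k : ℝ) (hk : 0 < k) (Ginv : ℝ → ℝ)
    (hL : Function.LeftInverse Ginv (G k)) (hR : Function.RightInverse Ginv (G k)) :
    (∀ t : ℝ, t ≠ 0 → g k (Ginv t) ≤ t / Ginv t) ∧
    (∀ t : ℝ, 0 < t → 0 ≤ g k (Ginv t) * Ginv t ∧ g k (Ginv t) * Ginv t ≤ t) ∧
    (∀ t : ℝ, t < 0 → t ≤ g k (Ginv t) * Ginv t ∧ g k (Ginv t) * Ginv t ≤ 0) := by
  have hGx : ∀ t, G k (Ginv t) = t := hR
  have hxpos : ∀ t, 0 < t → 0 < Ginv t := by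
    intro t ht
    by_contra h
    push_neg at h
    have := G_mono hk h
    rw [hGx t, G_zero] at this
    linarith
  have hxneg : ∀ t, t < 0 → Ginv t < 0 := by
    intro t ht
    by_contra h
    push_neg at h
    have := G_mono hk h (y := Ginv t)
    rw [hGx t, G_zero] at this
    linarith
  have hmain : ∀ t, 0 < t → g k (Ginv t) * Ginv t ≤ t := by
    intro t ht
    have := G_lb hk (hxpos t ht).le
    rw [hGx t] at this; exact this
  have hmainneg : ∀ t, t < 0 → t ≤ g k (Ginv t) * Ginv t := by
    intro t ht
    have hx := hxneg t ht
    have h1 := G_lb hk (x := -(Ginv t)) (by linarith)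
    rw [G_neg hk, hGx t, g_even] at h1
    nlinarith
  refine ⟨?_, ?_, ?_⟩
  · intro t ht
    rcases lt_or_gt_of_ne ht with htneg | htpos
    · have hx := hxneg t htneg
      rw [show t / Ginv t = (-t) / (-(Ginv t)) by rw [neg_div_neg_eq]]
      rw [le_div_iff₀ (by linarith)]
      nlinarith [hmainneg t htneg]
    · rw [le_div_iff₀ (hxpos t htpos)]
      exact hmain t htpos
  · intro t ht
    exact ⟨mul_nonneg (g_pos hk _).le (hxpos t ht).le, hmain t ht⟩
  · intro t ht
    refine ⟨hmainneg t ht, ?_⟩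
    have := g_pos hk (Ginv t)
    nlinarith [hxneg t ht]
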